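/- Localized wavelet coefficient estimates: Let d ≥ 1, η ≥ δ > 0, let Q ⊂ ℝ^d be a cube with center c(Q) and side length ℓ(Q), let f ∈ L¹_loc(ℝ^d), and let z = (w,t) ∈ Z^d and θ : ℝ^d → ℂ with ‖(Sy_z)^{−1}θ‖_{⋆,η,δ} ≤ 1. Then, with constants depending only on d, η, δ: (i) if w ∉ 3Q, |∫_Q f θ| ≤ C ⟨f⟩_{1,Q} ℓ(Q)^d t^η max{t, |w−c(Q)|}^{−(d+η)}; (ii) if w ∉ 3Q and ∫_Q f = 0, |∫_Q f θ| ≤ C ⟨f⟩_{1,Q} ℓ(Q)^{d+δ} t^{η−δ} max{t, |w−c(Q)|}^{−(d+η)}; (iii) if w ∈ Q, |∫_{(3Q)^c} f θ| ≤ C (t/ℓ(Q))^η inf_{u∈Q} Mf(u), where Mf(u) := sup{⨍_B |f| : B a ball containing u} is the Hardy–Littlewood maximal function. -/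

import Mathlib

open MeasureTheory Metric Filter Finset
open scoped ENNReal NNReal Real Topology RealInnerProductSpace

noncomputable section

abbrev Rd (d : ℕ) := EuclideanSpace ℝ (Fin d)

def Sy {d : ℕ} (w : Rd d) (t : ℝ) (φ : Rd d → ℂ) : Rd d → ℂ :=
  fun x => ((t ^ d)⁻¹ : ℝ) • φ (t⁻¹ • (x - w))

def SyInv {d : ℕ} (w : Rd d) (t : ℝ) (φ : Rd d → ℂ) : Rd d → ℂ :=
  fun x => (t ^ d : ℝ) • φ (w + t • x)

def SyInv2 {d : ℕ} (w : Rd d) (t : ℝ) (ν : Rd d × Rd d → ℂ) : Rd d × Rd d → ℂ :=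
  fun p => ((t ^ d) * (t ^ d) : ℝ) • ν (w + t • p.1, w + t • p.2)

def starBound {E : Type*} [NormedAddCommGroup E] (e δ C : ℝ) (φ : E → ℂ) : Prop :=
  (∀ x : E, (1 + ‖x‖) ^ e * ‖φ x‖ ≤ C) ∧
  ∀ x h : E, 0 < ‖h‖ → ‖h‖ ≤ 1 →
    (1 + ‖x‖) ^ e * ‖φ (x + h) - φ x‖ ≤ C * ‖h‖ ^ δ

def pderiv1 {d : ℕ} (i : Fin d) (f : Rd d → ℂ) : Rd d → ℂ :=
  fun x => fderiv ℝ f x (EuclideanSpace.single i 1)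

def mderiv {d : ℕ} (γ : Fin d → ℕ) (f : Rd d → ℂ) : Rd d → ℂ :=
  (List.finRange d).foldr (fun i g => (pderiv1 i)^[γ i] g) f

def pderivP {d : ℕ} (v : Rd d × Rd d) (f : Rd d × Rd d → ℂ) : Rd d × Rd d → ℂ :=
  fun x => fderiv ℝ f x v

def mderiv2 {d : ℕ} (γ₁ γ₂ : Fin d → ℕ) (f : Rd d × Rd d → ℂ) : Rd d × Rd d → ℂ :=
  (List.finRange d).foldr
    (fun i g => (pderivP ((EuclideanSpace.single i 1 : Rd d), (0 : Rd d)))^[γ₁ i] g)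
    ((List.finRange d).foldr
      (fun i g => (pderivP ((0 : Rd d), (EuclideanSpace.single i 1 : Rd d)))^[γ₂ i] g) f)

def mono {d : ℕ} (γ : Fin d → ℕ) (x : Rd d) : ℂ := ∏ i, (x i : ℂ) ^ γ i

def degOf {d : ℕ} (γ : Fin d → ℕ) : ℕ := ∑ i, γ i

def HasVanishingMoments {d : ℕ} (j : ℕ) (φ : Rd d → ℂ) : Prop :=
  ∀ γ : Fin d → ℕ, degOf γ ≤ j → ∫ x : Rd d, mono γ x * φ x = 0

def IsSchwartzFn {d : ℕ} (f : Rd d → ℂ) : Prop :=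
  ∃ Φ : SchwartzMap (Rd d) ℂ, ⇑Φ = f

def paperFT {d : ℕ} (φ : Rd d → ℂ) : Rd d → ℂ :=
  fun ξ => ((2 * Real.pi) ^ (-(d : ℝ) / 2) : ℝ) •
    ∫ x : Rd d, Complex.exp (-(Complex.I * ((inner ℝ x ξ : ℝ) : ℂ))) * φ x

def fmul {d : ℕ} (m : Rd d → ℂ) (φ : Rd d → ℂ) : Rd d → ℂ :=
  fun x => ((2 * Real.pi) ^ (-(d : ℝ) / 2) : ℝ) •
    ∫ ξ : Rd d, Complex.exp (Complex.I * ((inner ℝ ξ x : ℝ) : ℂ)) * (m ξ * paperFT φ ξ)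

def negDeriv {d : ℕ} (γ : Fin d → ℕ) : (Rd d → ℂ) → Rd d → ℂ :=
  fmul (fun ξ => mono γ ξ / (‖ξ‖ : ℂ) ^ (2 * degOf γ))

def fracD {d : ℕ} (σ : ℝ) : (Rd d → ℂ) → Rd d → ℂ :=
  fmul (fun ξ => ((‖ξ‖ ^ σ : ℝ) : ℂ))

def negDerivY {d : ℕ} (κ : Fin d → ℕ) (ν : Rd d × Rd d → ℂ) : Rd d × Rd d → ℂ :=
  fun p => negDeriv κ (fun y => ν (p.1, y)) p.2

def negDerivX {d : ℕ} (κ : Fin d → ℕ) (ν : Rd d × Rd d → ℂ) : Rd d × Rd d → ℂ :=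
  fun p => negDeriv κ (fun x => ν (x, p.2)) p.1

def Admissible {d : ℕ} (φ : Rd d → ℂ) : Prop :=
  ∀ ρ : Rd d, ‖ρ‖ = 1 → ∫ s in Set.Ioi (0 : ℝ), ‖paperFT φ (s • ρ)‖ ^ 2 / s = 1

def IsMotherWavelet (d D : ℕ) (φ : Rd d → ℂ) : Prop :=
  IsSchwartzFn φ ∧
  HasVanishingMoments (2 * D) φ ∧
  Function.support φ ⊆ closedBall 0 (1 / 2) ∧
  Admissible φ ∧
  ∀ γ : Fin d → ℕ, degOf γ ≤ D →
    HasVanishingMoments D (mderiv γ φ) ∧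
    IsSchwartzFn (negDeriv γ φ) ∧ HasVanishingMoments D (negDeriv γ φ)

def memPsi11 (d k : ℕ) (δ C : ℝ) (w : Rd d) (t : ℝ) (ν : Rd d × Rd d → ℂ) : Prop :=
  ContDiff ℝ k ν ∧
  ∀ γ₁ γ₂ : Fin d → ℕ, degOf γ₁ + degOf γ₂ ≤ k →
    starBound (2 * (d : ℝ) + k) δ (C / t ^ (degOf γ₁ + degOf γ₂))
      (SyInv2 w t (mderiv2 γ₁ γ₂ ν))

def memPsi10 (d k : ℕ) (δ C : ℝ) (w : Rd d) (t : ℝ) (ν : Rd d × Rd d → ℂ) : Prop :=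
  memPsi11 d k δ C w t ν ∧
  ∀ x : Rd d, ∀ α : Fin d → ℕ, degOf α ≤ k → ∫ y : Rd d, mono α y * ν (x, y) = 0

def memPsi01 (d k : ℕ) (δ C : ℝ) (w : Rd d) (t : ℝ) (ν : Rd d × Rd d → ℂ) : Prop :=
  memPsi11 d k δ C w t ν ∧
  ∀ y : Rd d, ∀ α : Fin d → ℕ, degOf α ≤ k → ∫ x : Rd d, mono α x * ν (x, y) = 0

def memPsi1 (d k : ℕ) (δ C : ℝ) (w : Rd d) (t : ℝ) (φ : Rd d → ℂ) : Prop :=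
  ContDiff ℝ k φ ∧
  ∀ γ : Fin d → ℕ, degOf γ ≤ k →
    starBound ((d : ℝ) + degOf γ) δ (C / t ^ degOf γ) (SyInv w t (mderiv γ φ))

def cube {d : ℕ} (c : Rd d) (r : ℝ) : Set (Rd d) := {x | ∀ i, |x i - c i| ≤ r}

def IsBMO {d : ℕ} (b : Rd d → ℂ) : Prop :=
  LocallyIntegrable b volume ∧
  ∃ M : ℝ, ∀ (c : Rd d) (r : ℝ), 0 < r →
    ⨍ x in cube c r, ‖b x - ⨍ y in cube c r, b y‖ ≤ M

def multiIdxLE (d N : ℕ) : Finset (Fin d → ℕ) :=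
  (Fintype.piFinset fun _ : Fin d => Finset.range (N + 1)).filter fun κ => degOf κ ≤ N

def multiIdxEq (d N : ℕ) : Finset (Fin d → ℕ) :=
  (Fintype.piFinset fun _ : Fin d => Finset.range (N + 1)).filter fun κ => degOf κ = N

def expOf (a : ℝ) : ℝ≥0∞ := if a = 0 then ∞ else ENNReal.ofReal a⁻¹

def truncMono {d : ℕ} (γ : Fin d → ℕ) (χ : Rd d → ℂ) (R : ℝ) : Rd d → ℂ :=
  fun x => mono γ x * χ (R⁻¹ • x)


namespace LWCE


lemma abs_coord_le_norm {d : ℕ} (y : Rd d) (i : Fin d) : |y i| ≤ ‖y‖ := by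
  rw [EuclideanSpace.norm_eq]
  have h1 : |y i| = Real.sqrt (|y i| ^ 2) := by
    rw [Real.sqrt_sq (abs_nonneg _)]
  rw [h1]
  apply Real.sqrt_le_sqrt
  have : |y i| ^ 2 = ‖y i‖ ^ 2 := by rw [Real.norm_eq_abs]
  rw [this]
  exact Finset.single_le_sum (f := fun j => ‖y j‖ ^ 2) (fun j _ => by positivity) (mem_univ i)

lemma norm_sub_le_of_mem_cube {d : ℕ} {c x : Rd d} {r : ℝ} (hr : 0 ≤ r)
    (hx : x ∈ cube c r) : ‖x - c‖ ≤ Real.sqrt d * r := by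
  rw [EuclideanSpace.norm_eq]
  have h : ∀ i, ‖(x - c) i‖ ^ 2 ≤ r ^ 2 := by
    intro i
    have h1 : (x - c) i = x i - c i := rfl
    rw [h1, Real.norm_eq_abs]
    have := hx i
    nlinarith [abs_nonneg (x i - c i)]
  calc Real.sqrt (∑ i, ‖(x - c) i‖ ^ 2) ≤ Real.sqrt (∑ _i : Fin d, r ^ 2) :=
        Real.sqrt_le_sqrt (Finset.sum_le_sum fun i _ => h i)
    _ = Real.sqrt (d * r ^ 2) := by simp [mul_comm]
    _ = Real.sqrt d * r := by
        rw [Real.sqrt_mul (by positivity), Real.sqrt_sq hr]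

lemma isClosed_cube {d : ℕ} (c : Rd d) (r : ℝ) : IsClosed (cube c r) := by
  have : cube c r = ⋂ i, {x : Rd d | |x i - c i| ≤ r} := by
    ext x; simp [cube, Set.mem_iInter]
  rw [this]
  refine isClosed_iInter fun i => ?_
  have hc : Continuous fun x : Rd d => |x i - c i| :=
    ((continuous_apply i).comp (by
      exact (PiLp.continuousLinearEquiv 2 ℝ (fun _ : Fin d => ℝ)).continuous)).sub
      continuous_const |>.abs
  exact isClosed_le hc continuous_const

lemma measurableSet_cube {d : ℕ} (c : Rd d) (r : ℝ) : MeasurableSet (cube c r) :=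
  (isClosed_cube c r).measurableSet

lemma cube_subset_closedBall {d : ℕ} (c : Rd d) {r : ℝ} (hr : 0 ≤ r) :
    cube c r ⊆ closedBall c (Real.sqrt d * r) := fun x hx => by
  rw [mem_closedBall, dist_eq_norm]
  exact norm_sub_le_of_mem_cube hr hx

lemma integrableOn_cube {d : ℕ} {f : Rd d → ℂ} (hf : LocallyIntegrable f volume)
    (c : Rd d) {r : ℝ} (hr : 0 ≤ r) : IntegrableOn f (cube c r) volume :=
  (hf.integrableOn_isCompact (isCompact_closedBall c (Real.sqrt d * r))).mono_set
    (cube_subset_closedBall c hr)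

lemma volume_cube {d : ℕ} (c : Rd d) {r : ℝ} (hr : 0 < r) :
    volume (cube c r) = ENNReal.ofReal ((2 * r) ^ d) := by
  have heq : cube c r = (MeasurableEquiv.toLp 2 (Fin d → ℝ)).symm ⁻¹'
      (Set.univ.pi fun i => Set.Icc (c i - r) (c i + r)) := by
    ext x
    simp only [cube, Set.mem_setOf_eq, Set.mem_preimage, Set.mem_pi, Set.mem_univ,
      Set.mem_Icc, forall_true_left, MeasurableEquiv.toLp_symm_apply]
    constructor
    · intro h i
      have := h i
      rw [abs_le] at this
      constructor <;> [linarith [this.1]; linarith [this.2]]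
    · intro h i
      rw [abs_le]
      have := h i
      constructor <;> [linarith [this.1]; linarith [this.2]]
  rw [heq, MeasurePreserving.measure_preimage
    (EuclideanSpace.volume_preserving_symm_measurableEquiv_toLp (Fin d))
    ((MeasurableSet.univ_pi fun i => measurableSet_Icc).nullMeasurableSet)]
  rw [volume_pi_pi]
  have : ∀ i : Fin d, volume (Set.Icc (c i - r) (c i + r)) = ENNReal.ofReal (2 * r) := by
    intro i
    rw [Real.volume_Icc]
    congr 1
    ring
  simp only [this, Finset.prod_const, Finset.card_univ, Fintype.card_fin]
  rw [← ENNReal.ofReal_pow (by positivity)]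



lemma smul_norm_aux {d : ℕ} (t : ℝ) (ht : 0 < t) (v : Rd d) :
    ‖t⁻¹ • v‖ = t⁻¹ * ‖v‖ := by
  rw [norm_smul, Real.norm_eq_abs, abs_of_pos (by positivity)]

lemma theta_decay {d : ℕ} {η δ : ℝ} {w : Rd d} {t : ℝ} (ht : 0 < t) {θ : Rd d → ℂ}
    (hθ : starBound ((d : ℝ) + η) δ 1 (SyInv w t θ)) (y : Rd d) :
    ‖θ y‖ ≤ t ^ η / (t + ‖y - w‖) ^ ((d : ℝ) + η) := by
  set e := (d : ℝ) + η with he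
  set s := ‖y - w‖ with hs
  have hs0 : 0 ≤ s := norm_nonneg _
  have h1 := hθ.1 (t⁻¹ • (y - w))
  have hx : w + t • t⁻¹ • (y - w) = y := by
    rw [smul_smul, mul_inv_cancel₀ ht.ne', one_smul]
    abel
  simp only [SyInv] at h1
  simp only [hx] at h1
  rw [smul_norm_aux t ht] at h1
  rw [norm_smul ((t:ℝ) ^ d) (θ y), Real.norm_eq_abs,
    abs_of_pos (by positivity : (0:ℝ) < t ^ d)] at h1
  -- h1 : (1 + t⁻¹ * s) ^ e * (t ^ d * ‖θ y‖) ≤ 1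
  have hb : (0:ℝ) < (1 + t⁻¹ * s) ^ e := by positivity
  have htd : (0:ℝ) < t ^ d := by positivity
  have h2 : ‖θ y‖ ≤ 1 / ((1 + t⁻¹ * s) ^ e * t ^ d) := by
    rw [le_div_iff₀ (by positivity)]
    calc ‖θ y‖ * ((1 + t⁻¹ * s) ^ e * t ^ d)
        = (1 + t⁻¹ * s) ^ e * (t ^ d * ‖θ y‖) := by ring
      _ ≤ 1 := h1
  refine h2.trans (le_of_eq ?_)
  have key : (1 + t⁻¹ * s) ^ e * t ^ d = (t + s) ^ e / t ^ η := by
    have h3 : (1 + t⁻¹ * s) = (t + s) / t := by field_simp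
    rw [h3, Real.div_rpow (by linarith) ht.le, he, Real.rpow_add ht, Real.rpow_natCast]
    have h4 : t ^ η ≠ 0 := by positivity
    have h5 : t ^ d ≠ 0 := by positivity
    field_simp
  rw [key, one_div_div]

lemma theta_holder {d : ℕ} {η δ : ℝ} (hδ : 0 < δ) {w : Rd d} {t : ℝ} (ht : 0 < t)
    {θ : Rd d → ℂ} (hθ : starBound ((d : ℝ) + η) δ 1 (SyInv w t θ)) (a y : Rd d)
    (hy : ‖y - a‖ ≤ t) :
    ‖θ y - θ a‖ ≤ t ^ (η - δ) * ‖y - a‖ ^ δ / (t + ‖a - w‖) ^ ((d : ℝ) + η) := by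
  set e := (d : ℝ) + η with he
  rcases eq_or_ne y a with rfl | hne
  · simp [Real.zero_rpow hδ.ne']
  set s := ‖a - w‖ with hs
  have hs0 : 0 ≤ s := norm_nonneg _
  have hya : 0 < ‖y - a‖ := by
    rw [norm_pos_iff]; exact sub_ne_zero.mpr hne
  have h1 := hθ.2 (t⁻¹ • (a - w)) (t⁻¹ • (y - a))
    (by rw [smul_norm_aux t ht]; positivity)
    (by rw [smul_norm_aux t ht]; rw [inv_mul_le_iff₀ ht]; linarith)
  simp only [SyInv] at h1
  have hx1 : w + t • (t⁻¹ • (a - w) + t⁻¹ • (y - a)) = y := by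
    rw [smul_add, smul_smul, smul_smul, mul_inv_cancel₀ ht.ne', one_smul, one_smul]
    abel
  have hx2 : w + t • t⁻¹ • (a - w) = a := by
    rw [smul_smul, mul_inv_cancel₀ ht.ne', one_smul]
    abel
  simp only [hx1, hx2] at h1
  rw [smul_norm_aux t ht, smul_norm_aux t ht, one_mul, ← smul_sub,
    norm_smul ((t:ℝ) ^ d) (θ y - θ a), Real.norm_eq_abs,
    abs_of_pos (by positivity : (0:ℝ) < t ^ d)] at h1
  -- h1 : (1 + t⁻¹ * s) ^ e * (t ^ d * ‖θ y - θ a‖) ≤ (t⁻¹ * ‖y - a‖) ^ δ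
  have hb : (0:ℝ) < (1 + t⁻¹ * s) ^ e := by positivity
  have htd : (0:ℝ) < t ^ d := by positivity
  have h2 : ‖θ y - θ a‖ ≤ (t⁻¹ * ‖y - a‖) ^ δ / ((1 + t⁻¹ * s) ^ e * t ^ d) := by
    rw [le_div_iff₀ (by positivity)]
    calc ‖θ y - θ a‖ * ((1 + t⁻¹ * s) ^ e * t ^ d)
        = (1 + t⁻¹ * s) ^ e * (t ^ d * ‖θ y - θ a‖) := by ring
      _ ≤ (t⁻¹ * ‖y - a‖) ^ δ := h1
  refine h2.trans (le_of_eq ?_)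
  have key : (1 + t⁻¹ * s) ^ e * t ^ d = (t + s) ^ e / t ^ η := by
    have h3 : (1 + t⁻¹ * s) = (t + s) / t := by field_simp
    rw [h3, Real.div_rpow (by linarith) ht.le, he, Real.rpow_add ht, Real.rpow_natCast]
    have h4 : t ^ η ≠ 0 := by positivity
    have h5 : t ^ d ≠ 0 := by positivity
    field_simp
  rw [key]
  have e1 : (t⁻¹ * ‖y - a‖) ^ δ = (t ^ δ)⁻¹ * ‖y - a‖ ^ δ := by
    rw [Real.mul_rpow (by positivity) hya.le, Real.inv_rpow ht.le]
  have e2 : t ^ (η - δ) = t ^ η / t ^ δ := Real.rpow_sub ht η δ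
  rw [e1, e2]
  have h6 : (t + s) ^ e ≠ 0 := by positivity
  have h7 : t ^ η ≠ 0 := by positivity
  have h8 : t ^ δ ≠ 0 := by positivity
  field_simp




lemma starBound_continuous {E : Type*} [NormedAddCommGroup E] {e δ C : ℝ} (hδ : 0 < δ)
    (he : 0 ≤ e) {φ : E → ℂ} (h : starBound e δ C φ) : Continuous φ := by
  rw [continuous_iff_continuousAt]
  intro x
  rw [ContinuousAt, tendsto_iff_dist_tendsto_zero]
  have hone : ∀ y : E, (1:ℝ) ≤ (1 + ‖y‖) ^ e := by
    intro y
    calc (1:ℝ) = 1 ^ e := (Real.one_rpow e).symm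
      _ ≤ (1 + ‖y‖) ^ e := Real.rpow_le_rpow (by norm_num) (by linarith [norm_nonneg y]) he
  have hb : ∀ y : E, dist y x ≤ 1 → dist (φ y) (φ x) ≤ C * dist y x ^ δ := by
    intro y hy
    rcases eq_or_ne y x with rfl | hne
    · simp [Real.zero_rpow hδ.ne']
    · have h0 : 0 < ‖y - x‖ := by rw [norm_pos_iff]; exact sub_ne_zero.mpr hne
      have h1 := h.2 x (y - x) h0 (by rwa [dist_eq_norm] at hy)
      rw [add_sub_cancel] at h1
      rw [dist_eq_norm, dist_eq_norm]
      calc ‖φ y - φ x‖ ≤ (1 + ‖x‖) ^ e * ‖φ y - φ x‖ :=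
            le_mul_of_one_le_left (norm_nonneg _) (hone x)
        _ ≤ C * ‖y - x‖ ^ δ := h1
  have hg : Tendsto (fun y => C * dist y x ^ δ) (𝓝 x) (𝓝 0) := by
    have h1 : Tendsto (fun y : E => dist y x) (𝓝 x) (𝓝 0) := by
      have := (continuous_id.dist (continuous_const : Continuous fun _ : E => x)).tendsto x
      simpa using this
    have h2 : ContinuousAt (fun s : ℝ => s ^ δ) 0 :=
      Real.continuousAt_rpow_const 0 δ (Or.inr hδ.le)
    have h3 := (h2.tendsto.comp h1).const_mul C
    simpa [Real.zero_rpow hδ.ne'] using h3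
  refine squeeze_zero' (Eventually.of_forall fun y => dist_nonneg) ?_ hg
  filter_upwards [Metric.closedBall_mem_nhds x one_pos] with y hy
  exact hb y (by rwa [Metric.mem_closedBall] at hy)

lemma theta_cont {d : ℕ} {η δ : ℝ} (hδ : 0 < δ) (he : 0 ≤ (d:ℝ) + η) {w : Rd d} {t : ℝ}
    (ht : 0 < t) {θ : Rd d → ℂ} (hθ : starBound ((d : ℝ) + η) δ 1 (SyInv w t θ)) :
    Continuous θ := by
  have hψ : Continuous (SyInv w t θ) := starBound_continuous hδ he hθ
  have hrep : θ = fun y => ((t:ℝ) ^ d)⁻¹ • SyInv w t θ (t⁻¹ • (y - w)) := by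
    funext y
    simp only [SyInv]
    rw [smul_smul]
    have : w + t • t⁻¹ • (y - w) = y := by
      rw [smul_smul, mul_inv_cancel₀ ht.ne', one_smul]; abel
    rw [this]
    have htd : ((t:ℝ) ^ d) ≠ 0 := by positivity
    rw [inv_mul_cancel₀ htd, one_smul]
  rw [hrep]
  exact (hψ.comp ((continuous_id.sub continuous_const).const_smul (t⁻¹ : ℝ))).const_smul (((t:ℝ) ^ d)⁻¹)

lemma geom_out {d : ℕ} {c w x : Rd d} {r : ℝ} (hr : 0 < r)
    (hw : w ∉ cube c (3 * r)) (hx : x ∈ cube c r) :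
    2 * r ≤ ‖x - w‖ ∧ ‖w - c‖ ≤ (1 + Real.sqrt d / 2) * ‖x - w‖ := by
  obtain ⟨i, hi⟩ : ∃ i, 3 * r < |w i - c i| := by
    by_contra hcon
    push_neg at hcon
    exact hw fun i => hcon i
  have hxi := hx i
  have h1 : 2 * r ≤ |x i - w i| := by
    have := abs_sub_abs_le_abs_sub (w i - c i) (x i - c i)
    have h2 : |w i - c i - (x i - c i)| = |x i - w i| := by
      rw [abs_sub_comm]; congr 1; ring
    rw [h2] at this
    linarith
  have h2 : 2 * r ≤ ‖x - w‖ := h1.trans (abs_coord_le_norm (x - w) i)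
  refine ⟨h2, ?_⟩
  have h3 : ‖w - c‖ ≤ ‖x - w‖ + ‖x - c‖ := by
    calc ‖w - c‖ = ‖(w - x) + (x - c)‖ := by congr 1; abel
      _ ≤ ‖w - x‖ + ‖x - c‖ := norm_add_le _ _
      _ = ‖x - w‖ + ‖x - c‖ := by rw [norm_sub_rev]
  have h4 : ‖x - c‖ ≤ Real.sqrt d * r := norm_sub_le_of_mem_cube hr.le hx
  have h5 : Real.sqrt d * r ≤ Real.sqrt d * (‖x - w‖ / 2) := by
    apply mul_le_mul_of_nonneg_left _ (Real.sqrt_nonneg d)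
    linarith
  calc ‖w - c‖ ≤ ‖x - w‖ + Real.sqrt d * r := by linarith
    _ ≤ ‖x - w‖ + Real.sqrt d * (‖x - w‖ / 2) := by linarith
    _ = (1 + Real.sqrt d / 2) * ‖x - w‖ := by ring

lemma geom_in {d : ℕ} {c w x : Rd d} {r : ℝ} (hr : 0 < r)
    (hw : w ∈ cube c r) (hx : x ∉ cube c (3 * r)) : 2 * r ≤ ‖x - w‖ := by
  obtain ⟨i, hi⟩ : ∃ i, 3 * r < |x i - c i| := by
    by_contra hcon
    push_neg at hcon
    exact hx fun i => hcon i
  have hwi := hw i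
  have h1 : 2 * r ≤ |x i - w i| := by
    have := abs_sub_abs_le_abs_sub (x i - c i) (w i - c i)
    have h2 : |x i - c i - (w i - c i)| = |x i - w i| := by congr 1; ring
    rw [h2] at this
    linarith
  exact h1.trans (abs_coord_le_norm (x - w) i)

lemma norm_integral_le_of_lintegral_le {α : Type*} [MeasurableSpace α] {μ : Measure α}
    {g : α → ℂ} (hg : AEStronglyMeasurable g μ) {B : ℝ} (hB : 0 ≤ B)
    (h : ∫⁻ a, (‖g a‖₊ : ℝ≥0∞) ∂μ ≤ ENNReal.ofReal B) : ‖∫ a, g a ∂μ‖ ≤ B := by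
  calc ‖∫ a, g a ∂μ‖ ≤ ∫ a, ‖g a‖ ∂μ := norm_integral_le_integral_norm g
    _ ≤ B := by
      rw [integral_norm_eq_lintegral_enorm hg]
      exact ENNReal.toReal_le_of_le_ofReal hB h


end LWCE


set_option maxHeartbeats 2000000 in
/-- Localized wavelet coefficient estimates, Lemma 5.2. -/
theorem localized_wavelet_coefficient_estimates
    (d : ℕ) (hd : 1 ≤ d) (η δ : ℝ) (hδ : 0 < δ) (hηδ : δ ≤ η) :
    ∃ C : ℝ, 0 < C ∧
      ∀ (c : Rd d) (r : ℝ), 0 < r →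
      ∀ f : Rd d → ℂ, LocallyIntegrable f volume →
      ∀ (w : Rd d) (t : ℝ), 0 < t →
      ∀ θ : Rd d → ℂ, starBound ((d : ℝ) + η) δ 1 (SyInv w t θ) →
        -- (i)
        (w ∉ cube c (3 * r) →
          ‖∫ x in cube c r, f x * θ x‖ ≤
            C * (⨍ x in cube c r, ‖f x‖) * (2 * r) ^ (d : ℝ) * t ^ η /
              max t ‖w - c‖ ^ ((d : ℝ) + η)) ∧
        -- (ii)
        (w ∉ cube c (3 * r) → (∫ x in cube c r, f x) = 0 →
          ‖∫ x in cube c r, f x * θ x‖ ≤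
            C * (⨍ x in cube c r, ‖f x‖) * (2 * r) ^ ((d : ℝ) + δ) * t ^ (η - δ) /
              max t ‖w - c‖ ^ ((d : ℝ) + η)) ∧
        -- (iii)
        (w ∈ cube c r →
          ∀ u ∈ cube c r, ∀ M : ℝ,
            (∀ (c' : Rd d) (r' : ℝ), 0 < r' → u ∈ ball c' r' →
              (⨍ x in ball c' r', ‖f x‖) ≤ M) →
            ‖∫ x in (cube c (3 * r))ᶜ, f x * θ x‖ ≤ C * (t / (2 * r)) ^ η * M) := by
  classical
  have hη : 0 < η := lt_of_lt_of_le hδ hηδ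
  have hsd1 : (1:ℝ) ≤ Real.sqrt d := by
    rw [show (1:ℝ) = Real.sqrt 1 from Real.sqrt_one.symm]
    exact Real.sqrt_le_sqrt (by exact_mod_cast hd)
  have hsd0 : (0:ℝ) < Real.sqrt d := lt_of_lt_of_le one_pos hsd1
  have he : (0:ℝ) < (d:ℝ) + η := by positivity
  have hK1 : (1:ℝ) ≤ 1 + Real.sqrt d / 2 := by linarith
  have hK0 : (0:ℝ) < 1 + Real.sqrt d / 2 := lt_of_lt_of_le one_pos hK1
  have hKe : (0:ℝ) < (1 + Real.sqrt d / 2) ^ ((d:ℝ) + η) := Real.rpow_pos_of_pos hK0 _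
  have hKe1 : (1:ℝ) ≤ (1 + Real.sqrt d / 2) ^ ((d:ℝ) + η) := by
    calc (1:ℝ) = 1 ^ ((d:ℝ) + η) := (Real.one_rpow _).symm
      _ ≤ _ := Real.rpow_le_rpow zero_le_one hK1 he.le
  have hV0 : (0:ℝ) ≤ (volume (ball (0 : Rd d) 1)).toReal := ENNReal.toReal_nonneg
  have hq1 : (2:ℝ) ^ (-η) < 1 :=
    Real.rpow_lt_one_of_one_lt_of_neg one_lt_two (by linarith)
  have hq0 : (0:ℝ) ≤ (2:ℝ) ^ (-η) := Real.rpow_nonneg (by norm_num) _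
  have h1q : (0:ℝ) < 1 - (2:ℝ) ^ (-η) := by linarith
  have hsdδ : (0:ℝ) ≤ Real.sqrt d ^ δ := Real.rpow_nonneg hsd0.le δ
  have hC3 : (0:ℝ) ≤ (volume (ball (0 : Rd d) 1)).toReal * (4 * Real.sqrt d) ^ d *
      (1 - (2:ℝ) ^ (-η))⁻¹ :=
    mul_nonneg (mul_nonneg hV0 (by positivity)) (inv_nonneg.mpr h1q.le)
  have hprod : (0:ℝ) ≤ (1 + Real.sqrt d / 2) ^ ((d:ℝ) + η) * Real.sqrt d ^ δ :=
    mul_nonneg hKe.le hsdδ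
  refine ⟨(1 + Real.sqrt d / 2) ^ ((d:ℝ) + η) * (2 * Real.sqrt d ^ δ + 1) +
    (volume (ball (0 : Rd d) 1)).toReal * (4 * Real.sqrt d) ^ d * (1 - (2:ℝ) ^ (-η))⁻¹ + 1,
    by nlinarith, ?_⟩
  intro c r hr f hf w t ht θ hθ
  have h2r : (0:ℝ) < 2 * r := by linarith
  have hθcont : Continuous θ := LWCE.theta_cont hδ he.le ht hθ
  have hfae : AEStronglyMeasurable f volume := hf.aestronglyMeasurable
  have hQm : MeasurableSet (cube c r) := LWCE.measurableSet_cube c r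
  have hfQ : IntegrableOn f (cube c r) volume := LWCE.integrableOn_cube hf c hr.le
  have hvolQ : (volume (cube c r)).toReal = (2 * r) ^ d := by
    rw [LWCE.volume_cube c hr, ENNReal.toReal_ofReal (by positivity)]
  have havg_nonneg : ∀ s : Set (Rd d), 0 ≤ ⨍ x in s, ‖f x‖ := by
    intro s
    rw [setAverage_eq, smul_eq_mul]
    exact mul_nonneg (inv_nonneg.mpr ENNReal.toReal_nonneg)
      (integral_nonneg fun x => norm_nonneg _)
  have havg : ∫ x in cube c r, ‖f x‖ = (⨍ x in cube c r, ‖f x‖) * (2 * r) ^ d := by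
    rw [setAverage_eq, smul_eq_mul, measureReal_def, hvolQ]
    have h2rd : ((2:ℝ) * r) ^ d ≠ 0 := by positivity
    field_simp
  have hθbdd : ∀ x, ‖θ x‖ ≤ t ^ η / t ^ ((d:ℝ) + η) := by
    intro x
    refine (LWCE.theta_decay ht hθ x).trans ?_
    apply div_le_div_of_nonneg_left (Real.rpow_nonneg ht.le η) (Real.rpow_pos_of_pos ht _)
    exact Real.rpow_le_rpow ht.le (by linarith [norm_nonneg (x - w)]) he.le
  have hfθQ : IntegrableOn (fun x => f x * θ x) (cube c r) volume := by
    have h1 : IntegrableOn (fun x => θ x * f x) (cube c r) volume :=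
      Integrable.bdd_mul hfQ (hθcont.aestronglyMeasurable.restrict)
        (Eventually.of_forall hθbdd)
    exact h1.congr (Eventually.of_forall fun x => mul_comm _ _)
  have hA : 0 < max t ‖w - c‖ := lt_of_lt_of_le ht (le_max_left _ _)
  have hAe : 0 < max t ‖w - c‖ ^ ((d:ℝ) + η) := Real.rpow_pos_of_pos hA _
  have hbound : w ∉ cube c (3 * r) → ∀ x ∈ cube c r,
      ‖θ x‖ ≤ (1 + Real.sqrt d / 2) ^ ((d:ℝ) + η) *
        (t ^ η / max t ‖w - c‖ ^ ((d:ℝ) + η)) := by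
    intro hw x hx
    have hg := LWCE.geom_out hr hw hx
    have h3 : max t ‖w - c‖ / (1 + Real.sqrt d / 2) ≤ t + ‖x - w‖ := by
      rcases max_cases t ‖w - c‖ with ⟨hmax, _⟩ | ⟨hmax, _⟩ <;> rw [hmax]
      · calc t / (1 + Real.sqrt d / 2) ≤ t := div_le_self ht.le hK1
          _ ≤ t + ‖x - w‖ := le_add_of_nonneg_right (norm_nonneg _)
      · calc ‖w - c‖ / (1 + Real.sqrt d / 2) ≤ ‖x - w‖ :=
            (div_le_iff₀ hK0).mpr (by linarith [hg.2])
          _ ≤ t + ‖x - w‖ := le_add_of_nonneg_left ht.le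
    have h4 : (0:ℝ) < max t ‖w - c‖ / (1 + Real.sqrt d / 2) := by positivity
    calc ‖θ x‖ ≤ t ^ η / (t + ‖x - w‖) ^ ((d:ℝ) + η) := LWCE.theta_decay ht hθ x
      _ ≤ t ^ η / (max t ‖w - c‖ / (1 + Real.sqrt d / 2)) ^ ((d:ℝ) + η) := by
          apply div_le_div_of_nonneg_left (Real.rpow_nonneg ht.le η)
            (Real.rpow_pos_of_pos h4 _)
          exact Real.rpow_le_rpow h4.le h3 he.le
      _ = (1 + Real.sqrt d / 2) ^ ((d:ℝ) + η) *
          (t ^ η / max t ‖w - c‖ ^ ((d:ℝ) + η)) := by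
          rw [Real.div_rpow hA.le hK0.le]
          rw [div_div_eq_mul_div]
          field_simp
  have key : ∀ g : Rd d → ℂ, IntegrableOn g (cube c r) volume → ∀ B : ℝ,
      (∀ x ∈ cube c r, ‖g x‖ ≤ ‖f x‖ * B) →
      ‖∫ x in cube c r, g x‖ ≤ (⨍ x in cube c r, ‖f x‖) * ((2 * r) ^ d * B) := by
    intro g hg B hgB
    calc ‖∫ x in cube c r, g x‖ ≤ ∫ x in cube c r, ‖g x‖ := norm_integral_le_integral_norm _
      _ ≤ ∫ x in cube c r, ‖f x‖ * B :=
          setIntegral_mono_on hg.norm (hfQ.norm.mul_const B) hQm hgB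
      _ = (∫ x in cube c r, ‖f x‖) * B := by rw [integral_mul_const]
      _ = (⨍ x in cube c r, ‖f x‖) * ((2 * r) ^ d * B) := by rw [havg]; ring
  refine ⟨?_, ?_, ?_⟩
  -- Part (i)
  · intro hw
    have h1 := key (fun x => f x * θ x) hfθQ
      ((1 + Real.sqrt d / 2) ^ ((d:ℝ) + η) * (t ^ η / max t ‖w - c‖ ^ ((d:ℝ) + η)))
      (fun x hx => by
        rw [norm_mul]
        exact mul_le_mul_of_nonneg_left (hbound hw x hx) (norm_nonneg _))
    refine h1.trans ?_
    rw [Real.rpow_natCast (2 * r) d]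
    have hR0 : 0 ≤ (⨍ x in cube c r, ‖f x‖) * (2 * r) ^ d * t ^ η /
        max t ‖w - c‖ ^ ((d:ℝ) + η) := by
      apply div_nonneg _ hAe.le
      exact mul_nonneg (mul_nonneg (havg_nonneg _) (by positivity)) (Real.rpow_nonneg ht.le η)
    calc (⨍ x in cube c r, ‖f x‖) * ((2 * r) ^ d *
          ((1 + Real.sqrt d / 2) ^ ((d:ℝ) + η) * (t ^ η / max t ‖w - c‖ ^ ((d:ℝ) + η))))
        = (1 + Real.sqrt d / 2) ^ ((d:ℝ) + η) *
          ((⨍ x in cube c r, ‖f x‖) * (2 * r) ^ d * t ^ η /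
            max t ‖w - c‖ ^ ((d:ℝ) + η)) := by ring
      _ ≤ ((1 + Real.sqrt d / 2) ^ ((d:ℝ) + η) * (2 * Real.sqrt d ^ δ + 1) +
          (volume (ball (0 : Rd d) 1)).toReal * (4 * Real.sqrt d) ^ d *
            (1 - (2:ℝ) ^ (-η))⁻¹ + 1) *
          ((⨍ x in cube c r, ‖f x‖) * (2 * r) ^ d * t ^ η /
            max t ‖w - c‖ ^ ((d:ℝ) + η)) := by
          apply mul_le_mul_of_nonneg_right _ hR0
          nlinarith
      _ = _ := by ring
  -- Part (ii)
  · intro hw hzero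
    have hcQ : c ∈ cube c r := fun i => by
      simp only [sub_self, abs_zero]; exact hr.le
    have hfθcQ : IntegrableOn (fun x => f x * θ c) (cube c r) volume := hfQ.mul_const _
    have hrw : ∫ x in cube c r, f x * θ x = ∫ x in cube c r, f x * (θ x - θ c) := by
      have h2 : (fun x => f x * (θ x - θ c)) = fun x => f x * θ x - f x * θ c :=
        funext fun x => by ring
      rw [h2, integral_sub hfθQ hfθcQ, integral_mul_const, hzero, zero_mul, sub_zero]
    rw [hrw]
    have hbound2 : ∀ x ∈ cube c r, ‖θ x - θ c‖ ≤
        2 * (1 + Real.sqrt d / 2) ^ ((d:ℝ) + η) * Real.sqrt d ^ δ *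
          ((2 * r) ^ δ * t ^ (η - δ) / max t ‖w - c‖ ^ ((d:ℝ) + η)) := by
      intro x hx
      have hxc : ‖x - c‖ ≤ Real.sqrt d * r := LWCE.norm_sub_le_of_mem_cube hr.le hx
      have hxc2r : ‖x - c‖ ≤ Real.sqrt d * (2 * r) := by nlinarith
      have hAle : max t ‖w - c‖ ≤ t + ‖c - w‖ := by
        apply max_le
        · linarith [norm_nonneg (c - w)]
        · rw [norm_sub_rev c w]; linarith [ht.le]
      have hpow : ‖x - c‖ ^ δ ≤ Real.sqrt d ^ δ * (2 * r) ^ δ := by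
        rw [← Real.mul_rpow hsd0.le h2r.le]
        exact Real.rpow_le_rpow (norm_nonneg _) hxc2r hδ.le
      have htη0 : (0:ℝ) ≤ t ^ (η - δ) := Real.rpow_nonneg ht.le _
      rcases le_or_gt ‖x - c‖ t with hle | hgt
      · have h3 := LWCE.theta_holder hδ ht hθ c x hle
        refine h3.trans ?_
        have h4 : t ^ (η - δ) * ‖x - c‖ ^ δ / (t + ‖c - w‖) ^ ((d:ℝ) + η) ≤
            t ^ (η - δ) * ‖x - c‖ ^ δ / max t ‖w - c‖ ^ ((d:ℝ) + η) := by
          apply div_le_div_of_nonneg_left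
            (mul_nonneg htη0 (Real.rpow_nonneg (norm_nonneg _) δ)) hAe
          exact Real.rpow_le_rpow hA.le hAle he.le
        refine h4.trans ?_
        have h5 : t ^ (η - δ) * ‖x - c‖ ^ δ ≤
            2 * (1 + Real.sqrt d / 2) ^ ((d:ℝ) + η) * Real.sqrt d ^ δ *
              ((2 * r) ^ δ * t ^ (η - δ)) := by
          have h6 : t ^ (η - δ) * ‖x - c‖ ^ δ ≤ t ^ (η - δ) *
              (Real.sqrt d ^ δ * (2 * r) ^ δ) :=
            mul_le_mul_of_nonneg_left hpow htη0
          refine h6.trans ?_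
          have h7 : (0:ℝ) ≤ t ^ (η - δ) * (Real.sqrt d ^ δ * (2 * r) ^ δ) := by
            apply mul_nonneg htη0 (mul_nonneg hsdδ (Real.rpow_nonneg h2r.le δ))
          nlinarith [hKe1, h7]
        calc t ^ (η - δ) * ‖x - c‖ ^ δ / max t ‖w - c‖ ^ ((d:ℝ) + η)
            ≤ 2 * (1 + Real.sqrt d / 2) ^ ((d:ℝ) + η) * Real.sqrt d ^ δ *
              ((2 * r) ^ δ * t ^ (η - δ)) / max t ‖w - c‖ ^ ((d:ℝ) + η) :=
              (div_le_div_iff_of_pos_right hAe).mpr h5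
          _ = 2 * (1 + Real.sqrt d / 2) ^ ((d:ℝ) + η) * Real.sqrt d ^ δ *
              ((2 * r) ^ δ * t ^ (η - δ) / max t ‖w - c‖ ^ ((d:ℝ) + η)) := by ring
      · have h3 : ‖θ x - θ c‖ ≤ 2 * ((1 + Real.sqrt d / 2) ^ ((d:ℝ) + η) *
            (t ^ η / max t ‖w - c‖ ^ ((d:ℝ) + η))) := by
          calc ‖θ x - θ c‖ ≤ ‖θ x‖ + ‖θ c‖ := norm_sub_le _ _
            _ ≤ _ := by
                have := add_le_add (hbound hw x hx) (hbound hw c hcQ)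
                linarith
        have h4 : t ^ η ≤ t ^ (η - δ) * (Real.sqrt d ^ δ * (2 * r) ^ δ) := by
          have h5 : t ^ η = t ^ (η - δ) * t ^ δ := by
            rw [← Real.rpow_add ht]; ring_nf
          rw [h5]
          apply mul_le_mul_of_nonneg_left _ htη0
          calc t ^ δ ≤ ‖x - c‖ ^ δ := Real.rpow_le_rpow ht.le hgt.le hδ.le
            _ ≤ _ := hpow
        refine h3.trans ?_
        calc 2 * ((1 + Real.sqrt d / 2) ^ ((d:ℝ) + η) *
              (t ^ η / max t ‖w - c‖ ^ ((d:ℝ) + η)))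
            = 2 * (1 + Real.sqrt d / 2) ^ ((d:ℝ) + η) * t ^ η /
              max t ‖w - c‖ ^ ((d:ℝ) + η) := by ring
          _ ≤ 2 * (1 + Real.sqrt d / 2) ^ ((d:ℝ) + η) *
              (t ^ (η - δ) * (Real.sqrt d ^ δ * (2 * r) ^ δ)) /
              max t ‖w - c‖ ^ ((d:ℝ) + η) := by
              exact (div_le_div_iff_of_pos_right hAe).mpr
                (mul_le_mul_of_nonneg_left h4 (by positivity))
          _ = 2 * (1 + Real.sqrt d / 2) ^ ((d:ℝ) + η) * Real.sqrt d ^ δ *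
              ((2 * r) ^ δ * t ^ (η - δ) / max t ‖w - c‖ ^ ((d:ℝ) + η)) := by ring
    have hint2 : IntegrableOn (fun x => f x * (θ x - θ c)) (cube c r) volume :=
      (hfθQ.sub hfθcQ).congr (Eventually.of_forall fun x => (mul_sub (f x) (θ x) (θ c)).symm)
    have h1 := key _ hint2 _ (fun x hx => by
      rw [norm_mul]
      exact mul_le_mul_of_nonneg_left (hbound2 x hx) (norm_nonneg _))
    refine h1.trans ?_
    have hsplit : (2 * r) ^ ((d:ℝ) + δ) = (2 * r) ^ d * (2 * r) ^ δ := by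
      rw [Real.rpow_add h2r, Real.rpow_natCast]
    rw [hsplit]
    have hR0 : 0 ≤ (⨍ x in cube c r, ‖f x‖) * ((2 * r) ^ d * (2 * r) ^ δ) *
        t ^ (η - δ) / max t ‖w - c‖ ^ ((d:ℝ) + η) := by
      apply div_nonneg _ hAe.le
      apply mul_nonneg
      apply mul_nonneg (havg_nonneg _)
      apply mul_nonneg (by positivity) (Real.rpow_nonneg h2r.le δ)
      exact Real.rpow_nonneg ht.le _
    calc (⨍ x in cube c r, ‖f x‖) * ((2 * r) ^ d *
          (2 * (1 + Real.sqrt d / 2) ^ ((d:ℝ) + η) * Real.sqrt d ^ δ *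
            ((2 * r) ^ δ * t ^ (η - δ) / max t ‖w - c‖ ^ ((d:ℝ) + η))))
        = 2 * (1 + Real.sqrt d / 2) ^ ((d:ℝ) + η) * Real.sqrt d ^ δ *
          ((⨍ x in cube c r, ‖f x‖) * ((2 * r) ^ d * (2 * r) ^ δ) * t ^ (η - δ) /
            max t ‖w - c‖ ^ ((d:ℝ) + η)) := by ring
      _ ≤ ((1 + Real.sqrt d / 2) ^ ((d:ℝ) + η) * (2 * Real.sqrt d ^ δ + 1) +
          (volume (ball (0 : Rd d) 1)).toReal * (4 * Real.sqrt d) ^ d *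
            (1 - (2:ℝ) ^ (-η))⁻¹ + 1) *
          ((⨍ x in cube c r, ‖f x‖) * ((2 * r) ^ d * (2 * r) ^ δ) * t ^ (η - δ) /
            max t ‖w - c‖ ^ ((d:ℝ) + η)) := by
          apply mul_le_mul_of_nonneg_right _ hR0
          nlinarith
      _ = _ := by ring
  -- Part (iii)
  · intro hwQ u huQ M hM
    haveI : Nontrivial (Rd d) := Module.nontrivial_of_finrank_pos (R := ℝ)
      (by rw [finrank_euclideanSpace_fin]; omega)
    have hM0 : 0 ≤ M := le_trans (havg_nonneg _) (hM u 1 one_pos (mem_ball_self one_pos))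
    have hgae : AEStronglyMeasurable (fun x => f x * θ x)
        (volume.restrict (cube c (3 * r))ᶜ) :=
      (hfae.mul hθcont.aestronglyMeasurable).restrict
    set V : ℝ := (volume (ball (0 : Rd d) 1)).toReal with hV_def
    set D : ℝ := M * (V * (4 * Real.sqrt d) ^ d) * (t / (2 * r)) ^ η with hD_def
    have hD0 : 0 ≤ D := by
      apply mul_nonneg (mul_nonneg hM0 (mul_nonneg hV0 (by positivity)))
      exact Real.rpow_nonneg (by positivity) η
    set Ak : ℕ → Set (Rd d) := fun k =>
      {x | 2 ^ k * (2 * r) ≤ ‖x - w‖ ∧ ‖x - w‖ < 2 ^ (k + 1) * (2 * r)} with hAk_def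
    have hAkm : ∀ k, MeasurableSet (Ak k) := by
      intro k
      have hcont : Continuous fun x : Rd d => ‖x - w‖ :=
        (continuous_id.sub continuous_const).norm
      exact MeasurableSet.inter (measurableSet_le measurable_const hcont.measurable)
        (measurableSet_lt hcont.measurable measurable_const)
    have hcover : (cube c (3 * r))ᶜ ⊆ ⋃ k, Ak k := by
      intro x hx
      have h1 : 2 * r ≤ ‖x - w‖ := LWCE.geom_in hr hwQ hx
      have hxw : 0 < ‖x - w‖ := lt_of_lt_of_le h2r h1
      have ha1 : (1:ℝ) ≤ ‖x - w‖ / (2 * r) := (le_div_iff₀ h2r).mpr (by linarith)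
      have ha0 : (0:ℝ) ≤ ‖x - w‖ / (2 * r) := by linarith
      have hfl : 1 ≤ ⌊‖x - w‖ / (2 * r)⌋₊ := Nat.le_floor (by exact_mod_cast ha1)
      refine Set.mem_iUnion.mpr ⟨Nat.log 2 ⌊‖x - w‖ / (2 * r)⌋₊, ?_, ?_⟩
      · have h2 : (2:ℕ) ^ Nat.log 2 ⌊‖x - w‖ / (2 * r)⌋₊ ≤ ⌊‖x - w‖ / (2 * r)⌋₊ :=
          Nat.pow_log_le_self 2 (by omega)
        have h3 : ((2:ℝ)) ^ Nat.log 2 ⌊‖x - w‖ / (2 * r)⌋₊ ≤ ‖x - w‖ / (2 * r) := by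
          calc ((2:ℝ)) ^ Nat.log 2 ⌊‖x - w‖ / (2 * r)⌋₊
              = (((2:ℕ) ^ Nat.log 2 ⌊‖x - w‖ / (2 * r)⌋₊ : ℕ) : ℝ) := by push_cast; ring
            _ ≤ (⌊‖x - w‖ / (2 * r)⌋₊ : ℝ) := by exact_mod_cast h2
            _ ≤ ‖x - w‖ / (2 * r) := Nat.floor_le ha0
        rw [le_div_iff₀ h2r] at h3
        exact h3
      · have h4 : ⌊‖x - w‖ / (2 * r)⌋₊ < 2 ^ (Nat.log 2 ⌊‖x - w‖ / (2 * r)⌋₊ + 1) :=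
          Nat.lt_pow_succ_log_self (by norm_num) _
        have h5 : ‖x - w‖ / (2 * r) < ((2:ℝ)) ^ (Nat.log 2 ⌊‖x - w‖ / (2 * r)⌋₊ + 1) := by
          calc ‖x - w‖ / (2 * r) < (⌊‖x - w‖ / (2 * r)⌋₊ : ℝ) + 1 := Nat.lt_floor_add_one _
            _ ≤ ((2:ℝ)) ^ (Nat.log 2 ⌊‖x - w‖ / (2 * r)⌋₊ + 1) := by
                have := Nat.succ_le_of_lt h4
                exact_mod_cast this
        rw [div_lt_iff₀ h2r] at h5
        exact h5
    have hterm : ∀ k : ℕ, (∫⁻ x in Ak k, (‖f x * θ x‖₊ : ℝ≥0∞)) ≤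
        ENNReal.ofReal (D * ((2:ℝ) ^ (-η)) ^ k) := by
      intro k
      have hb2 : (0:ℝ) < 2 ^ k := by positivity
      have h2k1 : (1:ℝ) ≤ 2 ^ k := by exact_mod_cast Nat.one_le_two_pow
      have hρ0 : (0:ℝ) < 2 ^ k * (4 * Real.sqrt d * (2 * r)) := by positivity
      have hsub : Ak k ⊆ ball w (2 ^ k * (4 * Real.sqrt d * (2 * r))) := by
        intro x hx
        rw [mem_ball, dist_eq_norm]
        calc ‖x - w‖ < 2 ^ (k + 1) * (2 * r) := hx.2
          _ ≤ 2 ^ k * (4 * Real.sqrt d * (2 * r)) := by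
              rw [pow_succ]
              nlinarith [mul_pos hb2 h2r]
      have hfb : IntegrableOn f (ball w (2 ^ k * (4 * Real.sqrt d * (2 * r)))) volume :=
        (hf.integrableOn_isCompact (isCompact_closedBall w _)).mono_set
          ball_subset_closedBall
      have huball : u ∈ ball w (2 ^ k * (4 * Real.sqrt d * (2 * r))) := by
        have hwu : u ∈ cube w (2 * r) := by
          intro i
          have h2 := huQ i
          have h3 := hwQ i
          have h4 : |u i - w i| ≤ |u i - c i| + |c i - w i| := by
            have h5 := abs_add_le (u i - c i) (c i - w i)
            have h6 : u i - c i + (c i - w i) = u i - w i := by ring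
            rwa [h6] at h5
          have h7 : |c i - w i| = |w i - c i| := abs_sub_comm _ _
          linarith
        have h1 : ‖u - w‖ ≤ Real.sqrt d * (2 * r) :=
          LWCE.norm_sub_le_of_mem_cube h2r.le hwu
        rw [mem_ball, dist_eq_norm]
        have hX : (0:ℝ) < Real.sqrt d * (2 * r) := mul_pos hsd0 h2r
        calc ‖u - w‖ ≤ Real.sqrt d * (2 * r) := h1
          _ < 2 ^ k * (4 * Real.sqrt d * (2 * r)) := by nlinarith
      have hballpos : 0 < (volume (ball w (2 ^ k * (4 * Real.sqrt d * (2 * r))))).toReal :=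
        ENNReal.toReal_pos (measure_ball_pos volume w hρ0).ne' measure_ball_lt_top.ne
      have hIball : ∫ x in ball w (2 ^ k * (4 * Real.sqrt d * (2 * r))), ‖f x‖ ≤
          M * (volume (ball w (2 ^ k * (4 * Real.sqrt d * (2 * r))))).toReal := by
        have h1 := hM w _ hρ0 huball
        rw [setAverage_eq, smul_eq_mul] at h1
        exact le_trans ((inv_mul_le_iff₀ hballpos).mp h1) (le_of_eq (mul_comm _ _))
      have hvolball : (volume (ball w (2 ^ k * (4 * Real.sqrt d * (2 * r))))).toReal =
          (2 ^ k * (4 * Real.sqrt d * (2 * r))) ^ d * V := by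
        rw [Measure.addHaar_ball volume w hρ0.le, finrank_euclideanSpace_fin,
          ENNReal.toReal_mul, ENNReal.toReal_ofReal (by positivity), hV_def]
      have hpt : ∀ x ∈ Ak k, (‖f x * θ x‖₊ : ℝ≥0∞) ≤
          (‖f x‖₊ : ℝ≥0∞) * ENNReal.ofReal (t ^ η / (2 ^ k * (2 * r)) ^ ((d:ℝ) + η)) := by
        intro x hx
        have h1 : ‖θ x‖ ≤ t ^ η / ((2:ℝ) ^ k * (2 * r)) ^ ((d:ℝ) + η) := by
          refine (LWCE.theta_decay ht hθ x).trans ?_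
          apply div_le_div_of_nonneg_left (Real.rpow_nonneg ht.le η)
            (Real.rpow_pos_of_pos (by positivity) _)
          apply Real.rpow_le_rpow (by positivity) ?_ he.le
          have h2 := hx.1
          linarith [norm_nonneg (x - w)]
        calc (‖f x * θ x‖₊ : ℝ≥0∞) = (‖f x‖₊ : ℝ≥0∞) * (‖θ x‖₊ : ℝ≥0∞) := by
              rw [nnnorm_mul, ENNReal.coe_mul]
          _ ≤ (‖f x‖₊ : ℝ≥0∞) * ENNReal.ofReal (t ^ η / (2 ^ k * (2 * r)) ^ ((d:ℝ) + η)) := by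
              apply mul_le_mul_right
              rw [← enorm_eq_nnnorm, ← ofReal_norm]
              exact ENNReal.ofReal_le_ofReal h1
      have harith : M * ((2 ^ k * (4 * Real.sqrt d * (2 * r))) ^ d * V) *
          (t ^ η / ((2:ℝ) ^ k * (2 * r)) ^ ((d:ℝ) + η)) = D * ((2:ℝ) ^ (-η)) ^ k := by
        have e1 : ((2:ℝ) ^ k * (4 * Real.sqrt d * (2 * r))) ^ d =
            ((2:ℝ) ^ k) ^ d * ((4 * Real.sqrt d) ^ d * (2 * r) ^ d) := by
          rw [mul_pow, mul_pow]
        have e2 : ((2:ℝ) ^ k * (2 * r)) ^ ((d:ℝ) + η) =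
            ((2:ℝ) ^ k) ^ ((d:ℝ) + η) * (2 * r) ^ ((d:ℝ) + η) :=
          Real.mul_rpow hb2.le h2r.le
        have e3 : ((2:ℝ) ^ k : ℝ) ^ (d:ℝ) = ((2:ℝ) ^ k) ^ d := Real.rpow_natCast _ d
        have e4 : ((2:ℝ) * r) ^ (d:ℝ) = (2 * r) ^ d := Real.rpow_natCast _ d
        have e5 : ((2:ℝ) ^ k) ^ ((d:ℝ) + η) = ((2:ℝ) ^ k) ^ (d:ℝ) * ((2:ℝ) ^ k) ^ η := by
          rw [Real.rpow_add hb2]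
        have e6 : ((2:ℝ) * r) ^ ((d:ℝ) + η) = (2 * r) ^ (d:ℝ) * (2 * r) ^ η := by
          rw [Real.rpow_add h2r]
        have e7 : ((2:ℝ) ^ (-η)) ^ k = (((2:ℝ) ^ k) ^ η)⁻¹ := by
          rw [← Real.rpow_natCast ((2:ℝ) ^ (-η)) k, ← Real.rpow_natCast (2:ℝ) k,
            ← Real.rpow_mul (by norm_num : (0:ℝ) ≤ 2),
            ← Real.rpow_mul (by norm_num : (0:ℝ) ≤ 2),
            ← Real.rpow_neg (by norm_num : (0:ℝ) ≤ 2)]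
          congr 1
          ring
        have e8 : (t / (2 * r)) ^ η = t ^ η / (2 * r) ^ η := Real.div_rpow ht.le h2r.le η
        rw [e1, e2, ← e3, ← e4, e5, e6, e7, hD_def, e8]
        have n1 : ((2:ℝ) ^ k) ^ (η:ℝ) ≠ 0 := by positivity
        have n2 : ((2:ℝ) * r) ^ (η:ℝ) ≠ 0 := by positivity
        have n3 : ((2:ℝ) * r) ^ ((d:ℝ)) ≠ 0 := by positivity
        have n4 : ((2:ℝ) ^ k) ^ ((d:ℝ)) ≠ 0 := by positivity
        field_simp
      calc ∫⁻ x in Ak k, (‖f x * θ x‖₊ : ℝ≥0∞)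
          ≤ ∫⁻ x in Ak k, (‖f x‖₊ : ℝ≥0∞) *
            ENNReal.ofReal (t ^ η / (2 ^ k * (2 * r)) ^ ((d:ℝ) + η)) :=
            setLIntegral_mono' (hAkm k) hpt
        _ = (∫⁻ x in Ak k, (‖f x‖₊ : ℝ≥0∞)) *
            ENNReal.ofReal (t ^ η / (2 ^ k * (2 * r)) ^ ((d:ℝ) + η)) :=
            lintegral_mul_const'' _ hfae.restrict.enorm
        _ ≤ (∫⁻ x in ball w (2 ^ k * (4 * Real.sqrt d * (2 * r))), (‖f x‖₊ : ℝ≥0∞)) *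
            ENNReal.ofReal (t ^ η / (2 ^ k * (2 * r)) ^ ((d:ℝ) + η)) :=
            mul_le_mul_left (lintegral_mono_set hsub) _
        _ = ENNReal.ofReal (∫ x in ball w (2 ^ k * (4 * Real.sqrt d * (2 * r))), ‖f x‖) *
            ENNReal.ofReal (t ^ η / (2 ^ k * (2 * r)) ^ ((d:ℝ) + η)) := by
            exact congrArg (· * _) (ofReal_integral_norm_eq_lintegral_enorm hfb).symm
        _ ≤ ENNReal.ofReal (M * ((2 ^ k * (4 * Real.sqrt d * (2 * r))) ^ d * V)) *
            ENNReal.ofReal (t ^ η / (2 ^ k * (2 * r)) ^ ((d:ℝ) + η)) := by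
            apply mul_le_mul_left
            apply ENNReal.ofReal_le_ofReal
            rw [← hvolball]
            exact hIball
        _ = ENNReal.ofReal (M * ((2 ^ k * (4 * Real.sqrt d * (2 * r))) ^ d * V) *
            (t ^ η / (2 ^ k * (2 * r)) ^ ((d:ℝ) + η))) :=
            (ENNReal.ofReal_mul (mul_nonneg hM0
              (mul_nonneg (by positivity) hV0))).symm
        _ = ENNReal.ofReal (D * ((2:ℝ) ^ (-η)) ^ k) := by rw [harith]
    have hsum : ∑' k : ℕ, ENNReal.ofReal (D * ((2:ℝ) ^ (-η)) ^ k) ≤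
        ENNReal.ofReal (D * (1 - (2:ℝ) ^ (-η))⁻¹) := by
      have hs : Summable fun k : ℕ => D * ((2:ℝ) ^ (-η)) ^ k :=
        (summable_geometric_of_lt_one hq0 hq1).mul_left D
      rw [← ENNReal.ofReal_tsum_of_nonneg (fun k => mul_nonneg hD0 (by positivity)) hs]
      apply ENNReal.ofReal_le_ofReal
      rw [tsum_mul_left, tsum_geometric_of_lt_one hq0 hq1]
    have hlint : ∫⁻ x in (cube c (3 * r))ᶜ, (‖f x * θ x‖₊ : ℝ≥0∞) ≤
        ENNReal.ofReal (D * (1 - (2:ℝ) ^ (-η))⁻¹) := by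
      calc ∫⁻ x in (cube c (3 * r))ᶜ, (‖f x * θ x‖₊ : ℝ≥0∞)
          ≤ ∫⁻ x in ⋃ k, Ak k, (‖f x * θ x‖₊ : ℝ≥0∞) := lintegral_mono_set hcover
        _ ≤ ∑' k : ℕ, ∫⁻ x in Ak k, (‖f x * θ x‖₊ : ℝ≥0∞) := lintegral_iUnion_le _ _
        _ ≤ ∑' k : ℕ, ENNReal.ofReal (D * ((2:ℝ) ^ (-η)) ^ k) := ENNReal.tsum_le_tsum hterm
        _ ≤ ENNReal.ofReal (D * (1 - (2:ℝ) ^ (-η))⁻¹) := hsum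
    have hfinal := LWCE.norm_integral_le_of_lintegral_le hgae
      (mul_nonneg hD0 (inv_nonneg.mpr h1q.le)) hlint
    refine hfinal.trans ?_
    have htr0 : (0:ℝ) ≤ (t / (2 * r)) ^ η * M :=
      mul_nonneg (Real.rpow_nonneg (by positivity) η) hM0
    calc D * (1 - (2:ℝ) ^ (-η))⁻¹
        = V * (4 * Real.sqrt d) ^ d * (1 - (2:ℝ) ^ (-η))⁻¹ * ((t / (2 * r)) ^ η * M) := by
          rw [hD_def]; ring
      _ ≤ ((1 + Real.sqrt d / 2) ^ ((d:ℝ) + η) * (2 * Real.sqrt d ^ δ + 1) +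
          V * (4 * Real.sqrt d) ^ d * (1 - (2:ℝ) ^ (-η))⁻¹ + 1) *
          ((t / (2 * r)) ^ η * M) := by
          apply mul_le_mul_of_nonneg_right _ htr0
          nlinarith
      _ = _ := by ring
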